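/- arXiv:2106.07407 — 2 statements merged into one kernel-verified Lean document; each statement's English description precedes it below -/
import Mathlib

section
/- (Peetre's lemma) Let E be a Banach space, F and G normed vector spaces, A : E → F and B : E → G bounded linear operators. Suppose there exists C > 0 such that ‖u‖_E ≤ C(‖Au‖_F + ‖Bu‖_G) for all u ∈ E, and B is compact. Then A has closed range in F and finite-dimensional kernel. -/
open Filter Metric Set Topology

/-- Key extraction lemma: under the Peetre inequality with `B` compact, any bounded
sequence whose image under `A` is Cauchy has a convergent subsequence. -/
lemma peetre_key {E F G : Type*}
    [NormedAddCommGroup E] [NormedSpace ℝ E] [CompleteSpace E]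
    [NormedAddCommGroup F] [NormedSpace ℝ F]
    [NormedAddCommGroup G] [NormedSpace ℝ G]
    (A : E →L[ℝ] F) (B : E →L[ℝ] G) (C : ℝ) (hC : 0 < C)
    (hineq : ∀ u : E, ‖u‖ ≤ C * (‖A u‖ + ‖B u‖))
    (hB : IsCompactOperator (B : E → G))
    (w : ℕ → E) (M : ℝ) (hM : ∀ n, ‖w n‖ ≤ M)
    (hAc : CauchySeq (fun n => A (w n))) :
    ∃ φ : ℕ → ℕ, StrictMono φ ∧ ∃ x : E, Tendsto (w ∘ φ) atTop (𝓝 x) := by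
  have hK : IsCompact (closure ((B : E →ₗ[ℝ] G) '' closedBall 0 M)) :=
    hB.isCompact_closure_image_of_isVonNBounded
      (NormedSpace.isVonNBounded_closedBall ℝ E M)
  have hmem : ∀ n, B (w n) ∈ closure ((B : E →ₗ[ℝ] G) '' closedBall 0 M) := fun n =>
    subset_closure ⟨w n, by simpa [mem_closedBall, dist_zero_right] using hM n, rfl⟩
  obtain ⟨g, -, φ, hφ, hBconv⟩ := hK.tendsto_subseq hmem
  have hA' : CauchySeq (fun n => A (w (φ n))) := hAc.comp_tendsto hφ.tendsto_atTop
  have hB' : CauchySeq (fun n => B (w (φ n))) := hBconv.cauchySeq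
  have hw : CauchySeq (w ∘ φ) := by
    rw [Metric.cauchySeq_iff] at hA' hB' ⊢
    intro ε hε
    obtain ⟨N1, h1⟩ := hA' (ε / (2 * C)) (by positivity)
    obtain ⟨N2, h2⟩ := hB' (ε / (2 * C)) (by positivity)
    refine ⟨max N1 N2, fun m hm n hn => ?_⟩
    have h1' := h1 m (le_of_max_le_left hm) n (le_of_max_le_left hn)
    have h2' := h2 m (le_of_max_le_right hm) n (le_of_max_le_right hn)
    rw [dist_eq_norm] at h1' h2' ⊢
    have key := hineq (w (φ m) - w (φ n))
    rw [map_sub, map_sub] at key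
    calc ‖w (φ m) - w (φ n)‖
        ≤ C * (‖A (w (φ m)) - A (w (φ n))‖ + ‖B (w (φ m)) - B (w (φ n))‖) := key
      _ < C * (ε / (2 * C) + ε / (2 * C)) := by
          apply mul_lt_mul_of_pos_left _ hC
          exact add_lt_add h1' h2'
      _ = ε := by field_simp; ring
  obtain ⟨x, hx⟩ := cauchySeq_tendsto_of_complete hw
  exact ⟨φ, hφ, x, hx⟩

/-- **Peetre's lemma.** Let `E` be a Banach space, `F`, `G` normed spaces,
`A : E → F` and `B : E → G` bounded linear operators. If there is `C > 0` with
`‖u‖ ≤ C(‖Au‖ + ‖Bu‖)` for all `u ∈ E`, and `B` is compact, then `A` has closed range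
and finite-dimensional kernel. -/
theorem stmt_11 {E F G : Type*}
    [NormedAddCommGroup E] [NormedSpace ℝ E] [CompleteSpace E]
    [NormedAddCommGroup F] [NormedSpace ℝ F]
    [NormedAddCommGroup G] [NormedSpace ℝ G]
    (A : E →L[ℝ] F) (B : E →L[ℝ] G) (C : ℝ) (hC : 0 < C)
    (hineq : ∀ u : E, ‖u‖ ≤ C * (‖A u‖ + ‖B u‖))
    (hB : IsCompactOperator (B : E → G)) :
    IsClosed (Set.range A) ∧ FiniteDimensional ℝ (LinearMap.ker (A : E →ₗ[ℝ] F)) := by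
  set N : Submodule ℝ E := LinearMap.ker (A : E →ₗ[ℝ] F) with hN
  have hNc : IsClosed (N : Set E) := ContinuousLinearMap.isClosed_ker A
  -- Lipschitz property of the quotient map
  have hlip : LipschitzWith 1 (N.mkQ) := by
    apply LipschitzWith.of_dist_le_mul
    intro a b
    rw [dist_eq_norm, dist_eq_norm, ← map_sub, NNReal.coe_one, one_mul]
    exact Submodule.Quotient.norm_mk_le N (a - b)
  -- Finite-dimensional kernel
  have hfin : FiniteDimensional ℝ (LinearMap.ker (A : E →ₗ[ℝ] F)) := by
    have hseq : IsSeqCompact (closedBall (0 : N) 1) := by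
      intro x hx
      set w : ℕ → E := fun n => (x n : E) with hw
      have hwM : ∀ n, ‖w n‖ ≤ 1 := fun n => by
        simpa [mem_closedBall, dist_zero_right] using hx n
      have hA0 : (fun n => A (w n)) = fun _ => 0 := by
        funext n
        exact (x n).2
      obtain ⟨φ, hφ, y, hy⟩ := peetre_key A B C hC hineq hB w 1 hwM
        (by rw [hA0]; exact cauchySeq_const 0)
      have hyN : y ∈ N := hNc.mem_of_tendsto hy (Eventually.of_forall fun n => (x (φ n)).2)
      refine ⟨⟨y, hyN⟩, ?_, φ, hφ, ?_⟩
      · rw [mem_closedBall, dist_zero_right]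
        exact le_of_tendsto (hy.norm) (Eventually.of_forall fun n => hwM (φ n))
      · rw [tendsto_subtype_rng]
        exact hy
    exact FiniteDimensional.of_isCompact_closedBall₀ ℝ one_pos hseq.isCompact
  refine ⟨?_, hfin⟩
  -- key estimate: ∃ c > 0, ∀ v, ‖mkQ v‖ ≤ c * ‖A v‖
  have hstar : ∃ c : ℝ, 0 < c ∧ ∀ v : E, ‖N.mkQ v‖ ≤ c * ‖A v‖ := by
    by_contra h
    push_neg at h
    have h' : ∀ n : ℕ, ∃ v : E, (n + 1 : ℝ) * ‖A v‖ < ‖N.mkQ v‖ := fun n =>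
      h (n + 1) (by positivity)
    choose u hu using h'
    have hpos : ∀ n, 0 < ‖N.mkQ (u n)‖ := fun n =>
      lt_of_le_of_lt (by positivity) (hu n)
    set s : ℕ → ℝ := fun n => ‖N.mkQ (u n)‖⁻¹ with hs
    have hq1 : ∀ n, ‖N.mkQ (s n • u n)‖ = 1 := fun n => by
      rw [map_smul, norm_smul, hs, Real.norm_eq_abs, abs_inv, abs_of_pos (hpos n),
        inv_mul_cancel₀ (hpos n).ne']
    have hrep : ∀ n : ℕ, ∃ m : E, N.mkQ m = N.mkQ (s n • u n) ∧ ‖m‖ < 2 := by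
      intro n
      obtain ⟨m, hm1, hm2⟩ := Submodule.Quotient.norm_mk_lt (N.mkQ (s n • u n)) one_pos
      refine ⟨m, hm1, ?_⟩
      rw [hq1 n] at hm2
      linarith
    choose w hw1 hw2 using hrep
    have hAw : ∀ n, A (w n) = s n • A (u n) := by
      intro n
      have : w n - s n • u n ∈ N := by
        rw [← Submodule.Quotient.eq, ← Submodule.mkQ_apply, ← Submodule.mkQ_apply]
        exact hw1 n
      have h0 : A (w n - s n • u n) = 0 := this
      rw [map_sub, map_smul, sub_eq_zero] at h0
      exact h0
    have hAnorm : ∀ n, ‖A (w n)‖ ≤ 1 / (n + 1 : ℝ) := by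
      intro n
      rw [hAw n, norm_smul, Real.norm_eq_abs, hs, abs_inv, abs_of_pos (hpos n)]
      rw [one_div]
      have h1 : ‖A (u n)‖ ≤ ‖N.mkQ (u n)‖ / (n + 1 : ℝ) := by
        rw [le_div_iff₀ (by positivity : (0:ℝ) < (n:ℝ) + 1)]
        nlinarith [hu n]
      calc ‖N.mkQ (u n)‖⁻¹ * ‖A (u n)‖
          ≤ ‖N.mkQ (u n)‖⁻¹ * (‖N.mkQ (u n)‖ / (n + 1 : ℝ)) := by
            apply mul_le_mul_of_nonneg_left h1 (by positivity)
        _ = ((n : ℝ) + 1)⁻¹ := by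
            rw [div_eq_mul_inv, ← mul_assoc, inv_mul_cancel₀ (hpos n).ne', one_mul]
    have hA0 : Tendsto (fun n => A (w n)) atTop (𝓝 0) := by
      rw [tendsto_zero_iff_norm_tendsto_zero]
      apply squeeze_zero (fun n => norm_nonneg _) hAnorm
      exact tendsto_one_div_add_atTop_nhds_zero_nat
    obtain ⟨φ, hφ, x, hx⟩ := peetre_key A B C hC hineq hB w 2
      (fun n => (hw2 n).le) hA0.cauchySeq
    have hAx : A x = 0 := by
      have h1 : Tendsto (fun n => A (w (φ n))) atTop (𝓝 (A x)) :=
        (A.continuous.tendsto x).comp hx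
      have h2 : Tendsto (fun n => A (w (φ n))) atTop (𝓝 0) :=
        hA0.comp hφ.tendsto_atTop
      exact tendsto_nhds_unique h1 h2
    have hxN : x ∈ N := hAx
    have hmk0 : N.mkQ x = 0 := (Submodule.Quotient.mk_eq_zero N).mpr hxN
    have hmkconv : Tendsto (fun n => ‖N.mkQ (w (φ n))‖) atTop (𝓝 ‖N.mkQ x‖) :=
      (continuous_norm.tendsto _).comp ((hlip.continuous.tendsto x).comp hx)
    have hconst : (fun n => ‖N.mkQ (w (φ n))‖) = fun _ => 1 := by
      funext n
      rw [hw1 (φ n), hq1 (φ n)]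
    rw [hconst] at hmkconv
    have : (1 : ℝ) = ‖N.mkQ x‖ := tendsto_nhds_unique tendsto_const_nhds hmkconv
    rw [hmk0, norm_zero] at this
    norm_num at this
  obtain ⟨c, hc, hcle⟩ := hstar
  -- closed range via sequences
  apply IsSeqClosed.isClosed
  intro f f₀ hf hlim
  choose u hu using hf
  have hfb : ∃ Mf : ℝ, ∀ n, ‖f n‖ ≤ Mf := by
    have : BddAbove (Set.range fun n => ‖f n‖) :=
      (hlim.norm).bddAbove_range
    obtain ⟨Mf, hMf⟩ := this
    exact ⟨Mf, fun n => hMf ⟨n, rfl⟩⟩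
  obtain ⟨Mf, hMf⟩ := hfb
  have hrep : ∀ n : ℕ, ∃ m : E, N.mkQ m = N.mkQ (u n) ∧ ‖m‖ ≤ c * Mf + 1 := by
    intro n
    obtain ⟨m, hm1, hm2⟩ := Submodule.Quotient.norm_mk_lt (N.mkQ (u n)) one_pos
    refine ⟨m, hm1, ?_⟩
    have h1 : ‖N.mkQ (u n)‖ ≤ c * ‖A (u n)‖ := hcle (u n)
    have h2 : ‖A (u n)‖ ≤ Mf := by rw [hu n]; exact hMf n
    nlinarith
  choose w hw1 hw2 using hrep
  have hAw : ∀ n, A (w n) = f n := by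
    intro n
    have : w n - u n ∈ N := by
      rw [← Submodule.Quotient.eq, ← Submodule.mkQ_apply, ← Submodule.mkQ_apply]
      exact hw1 n
    have h0 : A (w n - u n) = 0 := this
    rw [map_sub, sub_eq_zero] at h0
    rw [h0, hu n]
  have hAc : CauchySeq (fun n => A (w n)) := by
    have : (fun n => A (w n)) = f := funext hAw
    rw [this]
    exact hlim.cauchySeq
  obtain ⟨φ, hφ, x, hx⟩ := peetre_key A B C hC hineq hB w (c * Mf + 1) hw2 hAc
  have h1 : Tendsto (fun n => A (w (φ n))) atTop (𝓝 (A x)) :=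
    (A.continuous.tendsto x).comp hx
  have h2 : Tendsto (fun n => A (w (φ n))) atTop (𝓝 f₀) := by
    have : (fun n => A (w (φ n))) = fun n => f (φ n) := funext fun n => hAw (φ n)
    rw [this]
    exact hlim.comp hφ.tendsto_atTop
  exact ⟨x, tendsto_nhds_unique h1 h2⟩
end

section
/- In ℝ², the function φ(x) = 2/(log 2 · √(1−x²)) on the segment 𝔻₁ = (−1,1) satisfies −(1/2π)∫_{−1}^{1} log|x−y| φ(y) dy = 1 for all x ∈ (−1,1), and ∫_{−1}^{1} φ(x) dx = 2π/log 2. -/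
open MeasureTheory Set Real

noncomputable section

/-- The 2d equilibrium distribution `φ(x) = 2/(log 2 · √(1-x²))` on the segment `(-1,1)`. -/
def phiEq (x : ℝ) : ℝ := 2 / (Real.log 2 * Real.sqrt (1 - x ^ 2))

def L (u : ℝ) : ℝ := Real.log |Real.sin u|

lemma L_periodic : Function.Periodic L π := by
  intro x; simp [L, Real.sin_add_pi, abs_neg]

lemma L_neg (u : ℝ) : L (-u) = L u := by simp [L]

lemma L_pi_sub (u : ℝ) : L (π - u) = L u := by simp [L, Real.sin_pi_sub]

lemma neg_log_le (t : ℝ) (ht : 0 < t) : -Real.log t ≤ 2 * t ^ (-(1/2) : ℝ) := by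
  have h1 : Real.log (t ^ (-(1/2) : ℝ)) ≤ t ^ (-(1/2) : ℝ) - 1 :=
    Real.log_le_sub_one_of_pos (Real.rpow_pos_of_pos ht _)
  rw [Real.log_rpow ht] at h1
  have h2 : (0:ℝ) < t ^ (-(1/2) : ℝ) := Real.rpow_pos_of_pos ht _
  nlinarith

lemma L_meas : Measurable L :=
  Real.measurable_log.comp (Real.continuous_sin.abs.measurable)

lemma L_int_half : IntervalIntegrable L volume 0 (π/2) := by
  have hbound : IntervalIntegrable (fun u : ℝ => 4 * u ^ (-(1/2) : ℝ)) volume 0 (π/2) :=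
    (intervalIntegral.intervalIntegrable_rpow' (by norm_num)).const_mul 4
  apply hbound.mono_fun (L_meas.aestronglyMeasurable.restrict)
  have hsub : uIoc (0:ℝ) (π/2) = Ioc 0 (π/2) := uIoc_of_le (by positivity)
  rw [Filter.EventuallyLE, ae_restrict_iff' measurableSet_uIoc]
  refine Filter.Eventually.of_forall (fun u hu => ?_)
  rw [hsub] at hu
  obtain ⟨hu0, hu1⟩ := hu
  have hs : 0 < Real.sin u := Real.sin_pos_of_pos_of_lt_pi hu0 (lt_of_le_of_lt hu1 (by linarith [Real.pi_pos]))
  have hs1 : Real.sin u ≤ 1 := Real.sin_le_one u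
  have hL : L u = Real.log (Real.sin u) := by rw [L, abs_of_pos hs]
  have hlog : Real.log (Real.sin u) ≤ 0 := Real.log_nonpos hs.le hs1
  have h1 : ‖L u‖ = -Real.log (Real.sin u) := by rw [hL, Real.norm_eq_abs, abs_of_nonpos hlog]
  rw [h1]
  -- sin u ≥ u/2
  have hsin_ge : u / 2 ≤ Real.sin u := by
    have hms := Real.mul_le_sin hu0.le hu1
    have hc : (1:ℝ)/2 ≤ 2/π := by
      rw [div_le_div_iff₀ two_pos Real.pi_pos]; nlinarith [Real.pi_le_four]
    calc u/2 = u * (1/2) := by ring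
      _ ≤ u * (2/π) := mul_le_mul_of_nonneg_left hc hu0.le
      _ = 2/π * u := by ring
      _ ≤ Real.sin u := hms
  calc -Real.log (Real.sin u) ≤ 2 * (Real.sin u) ^ (-(1/2) : ℝ) := neg_log_le _ hs
    _ ≤ 2 * (u/2) ^ (-(1/2) : ℝ) := by
        have := Real.rpow_le_rpow_of_nonpos (by positivity : (0:ℝ) < u/2) hsin_ge (by norm_num : (-(1/2):ℝ) ≤ 0)
        linarith
    _ ≤ 4 * u ^ (-(1/2) : ℝ) := by
        have h2 : (u/2) ^ (-(1/2) : ℝ) = u ^ (-(1/2) : ℝ) * (2:ℝ) ^ ((1/2) : ℝ) := by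
          rw [div_eq_mul_inv, Real.mul_rpow hu0.le (by norm_num),
            show ((2:ℝ)⁻¹) = (2:ℝ)^(-1:ℝ) from (Real.rpow_neg_one 2).symm,
            ← Real.rpow_mul (by norm_num)]
          norm_num
        rw [h2]
        have h3 : (2:ℝ) ^ ((1/2) : ℝ) ≤ 2 := by
          calc (2:ℝ) ^ ((1/2) : ℝ) ≤ 2 ^ (1 : ℝ) :=
            Real.rpow_le_rpow_of_exponent_le (by norm_num) (by norm_num)
          _ = 2 := Real.rpow_one 2
        have h4 : (0:ℝ) ≤ u ^ (-(1/2) : ℝ) := Real.rpow_nonneg hu0.le _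
        nlinarith
    _ ≤ ‖4 * u ^ (-(1/2) : ℝ)‖ := le_abs_self _

lemma L_int_one_period : IntervalIntegrable L volume 0 π := by
  have h2 : IntervalIntegrable L volume (π/2) π := by
    have h4 := (L_int_half.comp_sub_left π)
    have heq : (fun x => L (π - x)) = L := funext L_pi_sub
    rw [heq] at h4
    have h5 := h4.symm
    have e1 : π - π/2 = π/2 := by ring
    rw [e1, sub_zero] at h5
    exact h5
  exact L_int_half.trans h2

lemma L_int_big : IntervalIntegrable L volume (-π) (2*π) := by
  have hl : IntervalIntegrable L volume (-π) 0 := by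
    have := L_int_one_period.comp_sub_right (-π)
    have heq : (fun x => L (x - -π)) = L := funext (fun x => by
      rw [sub_neg_eq_add]; exact (L_periodic x))
    rw [heq] at this
    simpa using this
  have hr : IntervalIntegrable L volume π (2*π) := by
    have := L_int_one_period.comp_sub_right π
    have heq : (fun x => L (x - π)) = L := funext (fun x => by
      have := L_periodic (x - π); simpa using this.symm)
    rw [heq] at this
    have e : (2:ℝ)*π = π + π := by ring
    rw [e]
    simpa using this
  exact (hl.trans L_int_one_period).trans hr

lemma L_int (a b : ℝ) (ha : a ∈ Icc (-π) (2*π)) (hb : b ∈ Icc (-π) (2*π)) :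
    IntervalIntegrable L volume a b := by
  apply L_int_big.mono_set
  rw [uIcc_of_le (by linarith [ha.1, hb.2, Real.pi_pos] : (-π:ℝ) ≤ 2*π)]
  exact uIcc_subset_Icc ha hb

def G (u : ℝ) : ℝ := Real.log |Real.cos u|

lemma G_eq (u : ℝ) : G u = L (π/2 - u) := by
  rw [L, Real.sin_pi_div_two_sub]; rfl

lemma pi_mem : ∀ x ∈ Icc (0:ℝ) π, x ∈ Icc (-π) (2*π) := fun x hx =>
  ⟨by linarith [hx.1, Real.pi_pos], by linarith [hx.2, Real.pi_pos]⟩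

lemma G_int_half : IntervalIntegrable G volume 0 (π/2) := by
  have h := L_int 0 (π/2) (pi_mem 0 ⟨le_refl 0, Real.pi_pos.le⟩)
    (pi_mem (π/2) ⟨by positivity, by linarith [Real.pi_pos]⟩)
  have h2 := (h.symm.comp_sub_left (π/2))
  have heq : (fun x => L (π/2 - x)) = G := funext (fun u => (G_eq u).symm)
  rw [heq] at h2
  have e1 : π/2 - π/2 = 0 := by ring
  rw [e1, sub_zero] at h2
  exact h2

lemma int_G_eq_int_L : ∫ u in (0:ℝ)..(π/2), G u = ∫ u in (0:ℝ)..(π/2), L u := by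
  have h := intervalIntegral.integral_comp_sub_left (a := 0) (b := π/2) L (π/2)
  have heq : (fun x => L (π/2 - x)) = G := funext (fun u => (G_eq u).symm)
  rw [heq] at h
  have e1 : π/2 - π/2 = 0 := by ring
  rw [e1, sub_zero] at h
  exact h

lemma L_split : ∫ u in (0:ℝ)..π, L u = 2 * ∫ u in (0:ℝ)..(π/2), L u := by
  have h : ∫ u in (π/2:ℝ)..π, L u = ∫ u in (0:ℝ)..(π/2), L u := by
    have h := intervalIntegral.integral_comp_sub_left (a := 0) (b := π/2) L π
    simp only [L_pi_sub] at h
    have e1 : π - π/2 = π/2 := by ring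
    rw [e1, sub_zero] at h
    exact h.symm
  have h2 := intervalIntegral.integral_add_adjacent_intervals
    (L_int 0 (π/2) (pi_mem 0 ⟨le_refl 0, Real.pi_pos.le⟩)
      (pi_mem (π/2) ⟨by positivity, by linarith [Real.pi_pos]⟩))
    (L_int (π/2) π (pi_mem (π/2) ⟨by positivity, by linarith [Real.pi_pos]⟩)
      (pi_mem π ⟨Real.pi_pos.le, le_refl π⟩))
  rw [← h2, h]; ring

lemma comp_half_int {f : ℝ → ℝ} {a b : ℝ} (h : IntervalIntegrable f volume (a/2) (b/2)) :
    IntervalIntegrable (fun x => f (x/2)) volume a b := by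
  have h2 := h.comp_mul_right (c := 2⁻¹)
  have e1 : a/2/2⁻¹ = a := by field_simp
  have e2 : b/2/2⁻¹ = b := by field_simp
  rw [e1, e2] at h2
  simpa [div_eq_mul_inv] using h2

lemma ae_ne (c : ℝ) : ∀ᵐ u : ℝ ∂volume, u ≠ c := by
  refine ae_iff.mpr ?_
  have h : {u : ℝ | ¬ u ≠ c} = {c} := by ext u; simp
  rw [h]
  exact measure_singleton c

lemma L_integral_pi : ∫ u in (0:ℝ)..π, L u = -π * Real.log 2 := by
  have hintL : IntervalIntegrable (fun u => L (u/2)) volume 0 π := by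
    apply comp_half_int
    rw [zero_div]
    exact L_int 0 (π/2) (pi_mem 0 ⟨le_refl 0, Real.pi_pos.le⟩)
      (pi_mem (π/2) ⟨by positivity, by linarith [Real.pi_pos]⟩)
  have hintG : IntervalIntegrable (fun u => G (u/2)) volume 0 π := by
    apply comp_half_int
    rw [zero_div]
    exact G_int_half
  have hcongr : ∫ u in (0:ℝ)..π, L u
      = ∫ u in (0:ℝ)..π, (Real.log 2 + (L (u/2) + G (u/2))) := by
    apply intervalIntegral.integral_congr_ae
    filter_upwards [ae_ne π] with u hne hu
    rw [uIoc_of_le Real.pi_pos.le] at hu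
    have hu0 : 0 < u := hu.1
    have huπ : u < π := lt_of_le_of_ne hu.2 hne
    have hs : 0 < Real.sin (u/2) :=
      Real.sin_pos_of_pos_of_lt_pi (by positivity) (by linarith)
    have hc : 0 < Real.cos (u/2) :=
      Real.cos_pos_of_mem_Ioo ⟨by linarith [Real.pi_pos], by linarith⟩
    have hdouble : Real.sin u = 2 * Real.sin (u/2) * Real.cos (u/2) := by
      have := Real.sin_two_mul (u/2)
      rw [show 2*(u/2) = u by ring] at this
      exact this
    rw [L, hdouble, abs_mul, abs_mul, abs_of_nonneg (by norm_num : (0:ℝ) ≤ 2),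
      Real.log_mul (by positivity) (by simp [abs_ne_zero]; exact hc.ne'),
      Real.log_mul (by norm_num) (by simp [abs_ne_zero]; exact hs.ne')]
    rw [L, G]; ring
  have hdiv : (∫ u in (0:ℝ)..π, L (u/2)) = 2 * ∫ u in (0:ℝ)..(π/2), L u := by
    have h := intervalIntegral.integral_comp_div (a := 0) (b := π) (c := 2) L (by norm_num)
    rw [zero_div] at h
    rw [h]; simp
  have hdivG : (∫ u in (0:ℝ)..π, G (u/2)) = 2 * ∫ u in (0:ℝ)..(π/2), G u := by
    have h := intervalIntegral.integral_comp_div (a := 0) (b := π) (c := 2) G (by norm_num)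
    rw [zero_div] at h
    rw [h]; simp
  have key : ∫ u in (0:ℝ)..π, L u
      = (π - 0) • Real.log 2
        + (2 * (∫ u in (0:ℝ)..(π/2), L u) + 2 * (∫ u in (0:ℝ)..(π/2), L u)) := by
    rw [hcongr, intervalIntegral.integral_add intervalIntegrable_const (hintL.add hintG),
      intervalIntegral.integral_add hintL hintG, intervalIntegral.integral_const,
      hdiv, hdivG, int_G_eq_int_L]
  have hL2 := L_split
  rw [smul_eq_mul, sub_zero] at key
  rw [hL2] at key ⊢
  linarith

lemma key_integral (φ : ℝ) (hφ0 : 0 < φ) (hφπ : φ < π) :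
    ∫ θ in (0:ℝ)..π, Real.log |Real.cos φ - Real.cos θ| = -π * Real.log 2 := by
  have hπ := Real.pi_pos
  have hcongr : ∫ θ in (0:ℝ)..π, Real.log |Real.cos φ - Real.cos θ|
      = ∫ θ in (0:ℝ)..π, (Real.log 2 + (L ((θ+φ)/2) + L ((θ-φ)/2))) := by
    apply intervalIntegral.integral_congr_ae
    filter_upwards [ae_ne φ] with θ hne hθ
    rw [uIoc_of_le Real.pi_pos.le] at hθ
    obtain ⟨hθ0, hθπ⟩ := hθ
    have h1 : Real.cos φ - Real.cos θ
        = -2 * Real.sin ((φ+θ)/2) * Real.sin ((φ-θ)/2) := Real.cos_sub_cos φ θ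
    have hs1 : 0 < Real.sin ((θ+φ)/2) :=
      Real.sin_pos_of_pos_of_lt_pi (by positivity) (by linarith)
    have hs2 : Real.sin ((θ-φ)/2) ≠ 0 := by
      intro h
      have h0 : (θ-φ)/2 = 0 := by
        rwa [Real.sin_eq_zero_iff_of_lt_of_lt (by linarith) (by linarith)] at h
      have : θ = φ := by linarith
      exact hne this
    have habs : |Real.cos φ - Real.cos θ|
        = 2 * (|Real.sin ((θ+φ)/2)| * |Real.sin ((θ-φ)/2)|) := by
      rw [h1, abs_mul, abs_mul]
      have e1 : (φ+θ)/2 = (θ+φ)/2 := by ring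
      have e2 : (φ-θ)/2 = -((θ-φ)/2) := by ring
      rw [e1, e2, Real.sin_neg, abs_neg]
      norm_num
      ring
    rw [habs, Real.log_mul (by norm_num)
        (mul_ne_zero (abs_ne_zero.mpr hs1.ne') (abs_ne_zero.mpr hs2)),
      Real.log_mul (abs_ne_zero.mpr hs1.ne') (abs_ne_zero.mpr hs2)]
    rfl
  -- memberships
  have m1 : φ/2 ∈ Icc (-π) (2*π) := ⟨by linarith, by linarith⟩
  have m2 : (π+φ)/2 ∈ Icc (-π) (2*π) := ⟨by linarith, by linarith⟩
  have m3 : (-φ)/2 ∈ Icc (-π) (2*π) := ⟨by linarith, by linarith⟩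
  have m4 : (π-φ)/2 ∈ Icc (-π) (2*π) := ⟨by linarith, by linarith⟩
  have m5 : (φ-π)/2 ∈ Icc (-π) (2*π) := ⟨by linarith, by linarith⟩
  -- integrability of the two shifted pieces
  have hintA : IntervalIntegrable (fun θ => L ((θ+φ)/2)) volume 0 π := by
    have h0 : IntervalIntegrable (fun v => L (v/2)) volume φ (π+φ) :=
      comp_half_int (L_int (φ/2) ((π+φ)/2) m1 m2)
    have h1 := h0.comp_add_right φ
    have e1 : φ - φ = 0 := by ring
    have e2 : π + φ - φ = π := by ring
    rw [e1, e2] at h1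
    exact h1
  have hintB : IntervalIntegrable (fun θ => L ((θ-φ)/2)) volume 0 π := by
    have h0 : IntervalIntegrable (fun v => L (v/2)) volume (-φ) (π-φ) :=
      comp_half_int (L_int ((-φ)/2) ((π-φ)/2) m3 m4)
    have h1 := h0.comp_sub_right φ
    have e1 : -φ + φ = 0 := by ring
    have e2 : π - φ + φ = π := by ring
    rw [e1, e2] at h1
    exact h1
  -- values of the two shifted integrals
  have hA : ∫ θ in (0:ℝ)..π, L ((θ+φ)/2) = 2 * ∫ u in (φ/2)..((π+φ)/2), L u := by
    have h1 := intervalIntegral.integral_comp_add_right (a := (0:ℝ)) (b := π)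
      (fun v => L (v/2)) φ
    rw [zero_add] at h1
    rw [h1, intervalIntegral.integral_comp_div (a := φ) (b := π+φ) (c := 2) L (by norm_num)]
    simp
  have hB : ∫ θ in (0:ℝ)..π, L ((θ-φ)/2) = 2 * ∫ u in ((-φ)/2)..((π-φ)/2), L u := by
    have h1 := intervalIntegral.integral_comp_sub_right (a := (0:ℝ)) (b := π)
      (fun v => L (v/2)) φ
    rw [zero_sub] at h1
    rw [h1, intervalIntegral.integral_comp_div (a := -φ) (b := π-φ) (c := 2) L (by norm_num)]
    simp
  have hBrefl : ∫ u in ((-φ)/2)..((π-φ)/2), L u = ∫ u in ((φ-π)/2)..(φ/2), L u := by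
    have h := intervalIntegral.integral_comp_neg (a := (φ-π)/2) (b := φ/2) L
    simp only [L_neg] at h
    have e1 : -(φ/2) = (-φ)/2 := by ring
    have e2 : -((φ-π)/2) = (π-φ)/2 := by ring
    rw [e1, e2] at h
    exact h.symm
  have hsum : (∫ u in ((φ-π)/2)..(φ/2), L u) + ∫ u in (φ/2)..((π+φ)/2), L u
      = ∫ u in ((φ-π)/2)..((π+φ)/2), L u :=
    intervalIntegral.integral_add_adjacent_intervals
      (L_int _ _ m5 m1) (L_int _ _ m1 m2)
  have hper : ∫ u in ((φ-π)/2)..((π+φ)/2), L u = -π * Real.log 2 := by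
    have h := L_periodic.intervalIntegral_add_eq ((φ-π)/2) 0
    rw [show (φ-π)/2 + π = (π+φ)/2 by ring, zero_add] at h
    rw [h]
    exact L_integral_pi
  rw [hcongr, intervalIntegral.integral_add intervalIntegrable_const (hintA.add hintB),
    intervalIntegral.integral_add hintA hintB, intervalIntegral.integral_const,
    hA, hB, hBrefl, smul_eq_mul, sub_zero]
  nlinarith [hsum, hper]

lemma cos_image : Real.cos '' Ioo 0 π = Ioo (-1:ℝ) 1 := by
  ext x
  constructor
  · rintro ⟨θ, hθ, rfl⟩
    obtain ⟨h0, hπ⟩ := hθ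
    constructor
    · have h := Real.strictAntiOn_cos ⟨h0.le, hπ.le⟩ ⟨Real.pi_pos.le, le_refl π⟩ hπ
      rwa [Real.cos_pi] at h
    · have h := Real.strictAntiOn_cos ⟨le_refl 0, Real.pi_pos.le⟩ ⟨h0.le, hπ.le⟩ h0
      rwa [Real.cos_zero] at h
  · rintro ⟨h1, h2⟩
    refine ⟨Real.arccos x, ⟨Real.arccos_pos.mpr h2, ?_⟩, Real.cos_arccos h1.le h2.le⟩
    refine lt_of_le_of_ne (Real.arccos_le_pi x) (fun h => ?_)
    rw [Real.arccos_eq_pi] at h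
    linarith

lemma cov (g : ℝ → ℝ) :
    ∫ y in Ioo (-1:ℝ) 1, g y = ∫ θ in Ioo 0 π, Real.sin θ * g (Real.cos θ) := by
  rw [← cos_image,
    integral_image_eq_integral_abs_deriv_smul measurableSet_Ioo
      (fun θ _ => (Real.hasDerivAt_cos θ).hasDerivWithinAt)
      (Real.injOn_cos.mono Ioo_subset_Icc_self) g]
  apply setIntegral_congr_fun measurableSet_Ioo
  intro θ hθ
  have hs : 0 < Real.sin θ := Real.sin_pos_of_pos_of_lt_pi hθ.1 hθ.2
  show |(-Real.sin θ)| • g (Real.cos θ) = Real.sin θ * g (Real.cos θ)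
  rw [smul_eq_mul, abs_neg, abs_of_pos hs]

lemma sin_mul_phi (θ : ℝ) (hθ : θ ∈ Ioo 0 π) :
    Real.sin θ * phiEq (Real.cos θ) = 2 / Real.log 2 := by
  have hs : 0 < Real.sin θ := Real.sin_pos_of_pos_of_lt_pi hθ.1 hθ.2
  have hsq : Real.sqrt (1 - Real.cos θ ^ 2) = Real.sin θ := by
    rw [← Real.sin_sq θ]
    exact Real.sqrt_sq hs.le
  have hl2 : Real.log 2 ≠ 0 := (Real.log_pos (by norm_num)).ne'
  rw [phiEq, hsq]
  field_simp

/-- The function `φ(x) = 2/(log 2 √(1-x²))` satisfies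
`-(1/2π)∫_{-1}^1 log|x-y| φ(y) dy = 1` on `(-1,1)` and `∫_{-1}^1 φ = 2π/log 2`. -/
theorem stmt_13 :
    (∀ x ∈ Ioo (-1 : ℝ) 1,
      -(1 / (2 * π)) * ∫ y in Ioo (-1 : ℝ) 1, Real.log |x - y| * phiEq y = 1) ∧
    ∫ x in Ioo (-1 : ℝ) 1, phiEq x = 2 * π / Real.log 2 := by
  have hπ := Real.pi_pos
  have hl2 : Real.log 2 ≠ 0 := (Real.log_pos (by norm_num)).ne'
  constructor
  · intro x hx
    set φ := Real.arccos x with hφdef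
    have hφ0 : 0 < φ := Real.arccos_pos.mpr hx.2
    have hφπ : φ < π := by
      refine lt_of_le_of_ne (Real.arccos_le_pi x) (fun h => ?_)
      rw [Real.arccos_eq_pi] at h
      linarith [hx.1]
    have hcos : Real.cos φ = x := Real.cos_arccos hx.1.le hx.2.le
    rw [cov (fun y => Real.log |x - y| * phiEq y)]
    have hcongr : ∫ θ in Ioo (0:ℝ) π, Real.sin θ * (Real.log |x - Real.cos θ| * phiEq (Real.cos θ))
        = ∫ θ in Ioo (0:ℝ) π, (2 / Real.log 2) * Real.log |Real.cos φ - Real.cos θ| := by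
      apply setIntegral_congr_fun measurableSet_Ioo
      intro θ hθ
      have h1 := sin_mul_phi θ hθ
      calc Real.sin θ * (Real.log |x - Real.cos θ| * phiEq (Real.cos θ))
          = (Real.sin θ * phiEq (Real.cos θ)) * Real.log |x - Real.cos θ| := by ring
        _ = (2 / Real.log 2) * Real.log |Real.cos φ - Real.cos θ| := by rw [h1, hcos]
    rw [hcongr, MeasureTheory.integral_const_mul, ← integral_Ioc_eq_integral_Ioo,
      ← intervalIntegral.integral_of_le Real.pi_pos.le, key_integral φ hφ0 hφπ]
    field_simp
  · rw [cov phiEq, setIntegral_congr_fun measurableSet_Ioo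
      (fun θ hθ => sin_mul_phi θ hθ), setIntegral_const]
    rw [Real.volume_real_Ioo, sub_zero, max_eq_left hπ.le, smul_eq_mul]
    field_simp
end
end
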